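/- In the online reusable resource allocation problem ORRA_n with reuse delay d, the problem is d-bounded-influence: for any histories I = (e_{1:m}, a_{1:m}) and I' = (e'_{1:m}, a'_{1:m}) and any request suffix e_{m+1:∞} with finite support, Opt(ORRA_n^I, e_{m+1:∞}) ≥ Opt(ORRA_n^{I'}, e_{m+1:∞}) - d. -/

import Mathlib

/-- Next-availability times of the `n` reusable resources after `t` periods: resource
`i`, if allocated at period `t+1` (eligible, chosen and currently available), becomes
available again only at period `t+1+d`. -/
def Wt (n d : ℕ) (e : ℕ → Fin n → Bool) (a : ℕ → Option (Fin n)) :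
    ℕ → Fin n → ℕ
  | 0 => fun _ => 1
  | t + 1 => fun i =>
      if a (t + 1) = some i ∧ Wt n d e a t i ≤ t + 1 ∧ e (t + 1) i = true
      then t + 1 + d else Wt n d e a t i

/-- Reward of the online reusable resource allocation problem ORRA_n at period `t`:
`1` iff the request at period `t` is successfully fulfilled. -/
def Rorra (n d : ℕ) (e : ℕ → Fin n → Bool) (a : ℕ → Option (Fin n)) (t : ℕ) : ℕ :=
  match a t with
  | none => 0
  | some i => if Wt n d e a t i = t + d then 1 else 0

lemma wt_le (n d : ℕ) (hd : 1 ≤ d) (e : ℕ → Fin n → Bool) (a : ℕ → Option (Fin n)) :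
    ∀ t i, Wt n d e a t i ≤ t + d := by
  intro t
  induction t with
  | zero => intro i; simpa [Wt] using hd
  | succ t ih =>
    intro i
    simp only [Wt]
    split
    · omega
    · exact le_trans (ih i) (by omega)

lemma wt_mono (n d : ℕ) (hd : 1 ≤ d) (e : ℕ → Fin n → Bool) (a : ℕ → Option (Fin n))
    (t : ℕ) (i : Fin n) : Wt n d e a t i ≤ Wt n d e a (t + 1) i := by
  simp only [Wt]
  split
  · exact le_trans (wt_le n d hd e a t i) (by omega)
  · exact le_rfl

lemma rorra_le_one (n d : ℕ) (e : ℕ → Fin n → Bool) (a : ℕ → Option (Fin n)) (t : ℕ) :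
    Rorra n d e a t ≤ 1 := by
  unfold Rorra
  cases ha : a t
  · simp
  · simp only []
    split <;> simp

lemma rorra_eq_one (n d : ℕ) (e : ℕ → Fin n → Bool) (a : ℕ → Option (Fin n)) (t : ℕ)
    (h : Rorra n d e a t = 1) : ∃ i, a t = some i ∧ Wt n d e a t i = t + d := by
  unfold Rorra at h
  cases ha : a t
  · rw [ha] at h; simp at h
  · rename_i i
    refine ⟨i, rfl, ?_⟩
    rw [ha] at h
    simp only [] at h
    split at h
    · assumption
    · simp at h

lemma wt_succ_eq (n d : ℕ) (hd : 1 ≤ d) (e : ℕ → Fin n → Bool) (a : ℕ → Option (Fin n))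
    (s : ℕ) (i : Fin n) (h : Wt n d e a (s + 1) i = s + 1 + d) :
    a (s + 1) = some i ∧ Wt n d e a s i ≤ s + 1 ∧ e (s + 1) i = true := by
  by_cases hc : a (s + 1) = some i ∧ Wt n d e a s i ≤ s + 1 ∧ e (s + 1) i = true
  · exact hc
  · exfalso
    simp only [Wt, if_neg hc] at h
    have := wt_le n d hd e a s i
    omega
lemma key (n d : ℕ) (hd : 1 ≤ d) (m M : ℕ)
    (E E' : ℕ → Fin n → Bool) (hE : ∀ t, m < t → E t = E' t)
    (a b' : ℕ → Option (Fin n)) :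
    ∃ b : ℕ → Option (Fin n), (∀ s, s ≤ m → b s = a s) ∧
      ∑ t ∈ Finset.Icc (m + 1) M, Rorra n d E' b' t ≤
        ∑ t ∈ Finset.Icc (m + 1) M, Rorra n d E b t + d := by
  classical
  set b : ℕ → Option (Fin n) :=
    fun s => if s ≤ m then a s
      else if m + d ≤ s ∧ Rorra n d E' b' s = 1 then b' s else none with hb
  refine ⟨b, fun s hs => by simp [hb, hs], ?_⟩
  have inv : ∀ t, m ≤ t → ∀ i,
      Wt n d E b t i ≤ max (Wt n d E' b' t i) (m + d) := by
    intro t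
    induction t with
    | zero =>
      intro hm i
      exact le_max_of_le_right (le_trans (wt_le n d hd E b 0 i) (by omega))
    | succ t ih =>
      intro hmt i
      rcases Nat.lt_or_ge t m with h | h
      · have hmeq : m = t + 1 := by omega
        exact le_max_of_le_right (by rw [hmeq]; exact wt_le n d hd E b (t + 1) i)
      · have ih' := ih h
        simp only [Wt]
        split
        · rename_i hcond
          obtain ⟨hbi, hw, he⟩ := hcond
          have h1 : ¬ (t + 1 ≤ m) := by omega
          rw [hb] at hbi
          simp only [h1, if_false] at hbi
          by_cases h2 : m + d ≤ t + 1 ∧ Rorra n d E' b' (t + 1) = 1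
          · rw [if_pos h2] at hbi
            obtain ⟨j, hj, hwj⟩ := rorra_eq_one n d E' b' (t + 1) h2.2
            rw [hj] at hbi
            have hij : j = i := by injection hbi
            subst hij
            exact le_max_of_le_left (le_of_eq hwj.symm)
          · rw [if_neg h2] at hbi
            exact absurd hbi (by simp)
        · refine le_trans (ih' i) (max_le_max ?_ le_rfl)
          exact wt_mono n d hd E' b' t i
  have hrew : ∀ t, m + d ≤ t → Rorra n d E' b' t ≤ Rorra n d E b t := by
    intro t ht
    obtain ⟨s, rfl⟩ := Nat.exists_eq_succ_of_ne_zero (show t ≠ 0 by omega)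
    by_cases h1 : Rorra n d E' b' (s + 1) = 1
    · obtain ⟨i, hbi, hwi⟩ := rorra_eq_one n d E' b' (s + 1) h1
      obtain ⟨_, hle, he⟩ := wt_succ_eq n d hd E' b' s i hwi
      have hbs : b (s + 1) = some i := by
        rw [hb]
        dsimp only
        rw [if_neg (show ¬ (s + 1 ≤ m) by omega), if_pos (⟨ht, h1⟩ : m + d ≤ s + 1 ∧ Rorra n d E' b' (s + 1) = 1)]
        exact hbi
      have hinv := inv s (by omega) i
      have hwb : Wt n d E b s i ≤ s + 1 :=
        le_trans hinv (max_le hle ht)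
      have heb : E (s + 1) i = true := by rw [hE (s + 1) (by omega)]; exact he
      have hwbe : Wt n d E b (s + 1) i = s + 1 + d := by
        simp only [Wt]; rw [if_pos ⟨hbs, hwb, heb⟩]
      have hone : Rorra n d E b (s + 1) = 1 := by
        unfold Rorra; rw [hbs]; simp [hwbe]
      rw [h1, hone]
    · have h0 : Rorra n d E' b' (s + 1) = 0 := by
        have := rorra_le_one n d E' b' (s + 1); omega
      rw [h0]; exact Nat.zero_le _
  rw [← Finset.sum_filter_add_sum_filter_not (Finset.Icc (m + 1) M)
    (fun t => m + d ≤ t) (Rorra n d E' b')]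
  have h2 : ∑ t ∈ (Finset.Icc (m + 1) M).filter (fun t => ¬ m + d ≤ t),
      Rorra n d E' b' t ≤ d := by
    calc ∑ t ∈ (Finset.Icc (m + 1) M).filter (fun t => ¬ m + d ≤ t),
          Rorra n d E' b' t
        ≤ ∑ _t ∈ (Finset.Icc (m + 1) M).filter (fun t => ¬ m + d ≤ t), 1 :=
          Finset.sum_le_sum (fun t _ => rorra_le_one n d E' b' t)
      _ = ((Finset.Icc (m + 1) M).filter (fun t => ¬ m + d ≤ t)).card := by
          simp
      _ ≤ (Finset.Ico (m + 1) (m + d)).card := by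
          apply Finset.card_le_card
          intro t htm
          simp only [Finset.mem_filter, Finset.mem_Icc] at htm
          simp only [Finset.mem_Ico]
          omega
      _ ≤ d := by rw [Nat.card_Ico]; omega
  have h3 : ∑ t ∈ (Finset.Icc (m + 1) M).filter (fun t => m + d ≤ t),
      Rorra n d E' b' t ≤ ∑ t ∈ Finset.Icc (m + 1) M, Rorra n d E b t := by
    calc ∑ t ∈ (Finset.Icc (m + 1) M).filter (fun t => m + d ≤ t),
          Rorra n d E' b' t
        ≤ ∑ t ∈ (Finset.Icc (m + 1) M).filter (fun t => m + d ≤ t),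
          Rorra n d E b t := by
          apply Finset.sum_le_sum
          intro t htm
          exact hrew t (Finset.mem_filter.mp htm).2
      _ ≤ ∑ t ∈ Finset.Icc (m + 1) M, Rorra n d E b t :=
          Finset.sum_le_sum_of_subset (Finset.filter_subset _ _)
  omega

/-- ORRA_n is d-bounded-influence: for any two histories `(e, a)` and `(e', a')` of
length `m` and any common finite-support request suffix `f`, the hindsight optima of
the two partial problems differ by at most `d`. -/
theorem stmt_13 (n d : ℕ) (hd : 1 ≤ d) (m M : ℕ) (hm : m ≤ M)
    (e e' : ℕ → Fin n → Bool) (a a' : ℕ → Option (Fin n))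
    (f : ℕ → Fin n → Bool) (hfin : ∀ t, M < t → ∀ i, f t i = false) :
    (⨆ b : {b : ℕ → Option (Fin n) // ∀ s, s ≤ m → b s = a s},
        ((∑ t ∈ Finset.Icc (m + 1) M,
            Rorra n d (fun s => if s ≤ m then e s else f s) b.1 t : ℕ) : ℝ))
      ≥ (⨆ b : {b : ℕ → Option (Fin n) // ∀ s, s ≤ m → b s = a' s},
          ((∑ t ∈ Finset.Icc (m + 1) M,
              Rorra n d (fun s => if s ≤ m then e' s else f s) b.1 t : ℕ) : ℝ))
        - (d : ℝ) := by
  classical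
  set E : ℕ → Fin n → Bool := fun s => if s ≤ m then e s else f s with hEdef
  set E' : ℕ → Fin n → Bool := fun s => if s ≤ m then e' s else f s with hE'def
  have hE : ∀ t, m < t → E t = E' t := by
    intro t ht
    simp [hEdef, hE'def, if_neg (show ¬ t ≤ m by omega)]
  have hne : Nonempty {b : ℕ → Option (Fin n) // ∀ s, s ≤ m → b s = a s} :=
    ⟨⟨a, fun _ _ => rfl⟩⟩
  have hne' : Nonempty {b : ℕ → Option (Fin n) // ∀ s, s ≤ m → b s = a' s} :=
    ⟨⟨a', fun _ _ => rfl⟩⟩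
  have hbdd : BddAbove (Set.range
      fun b : {b : ℕ → Option (Fin n) // ∀ s, s ≤ m → b s = a s} =>
        ((∑ t ∈ Finset.Icc (m + 1) M, Rorra n d E b.1 t : ℕ) : ℝ)) := by
    refine ⟨(((Finset.Icc (m + 1) M).card : ℕ) : ℝ), ?_⟩
    rintro x ⟨b, rfl⟩
    have hle : (∑ t ∈ Finset.Icc (m + 1) M, Rorra n d E b.1 t)
        ≤ (Finset.Icc (m + 1) M).card := by
      calc ∑ t ∈ Finset.Icc (m + 1) M, Rorra n d E b.1 t
          ≤ ∑ _t ∈ Finset.Icc (m + 1) M, 1 :=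
            Finset.sum_le_sum (fun t _ => rorra_le_one n d E b.1 t)
        _ = (Finset.Icc (m + 1) M).card := by simp
    simp only []
    exact_mod_cast hle
  rw [ge_iff_le, sub_le_iff_le_add]
  apply ciSup_le
  intro b'
  obtain ⟨b, hbext, hsum⟩ := key n d hd m M E E' hE a b'.1
  have h1 : ((∑ t ∈ Finset.Icc (m + 1) M, Rorra n d E b t : ℕ) : ℝ)
      ≤ ⨆ b : {b : ℕ → Option (Fin n) // ∀ s, s ≤ m → b s = a s},
        ((∑ t ∈ Finset.Icc (m + 1) M, Rorra n d E b.1 t : ℕ) : ℝ) :=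
    le_ciSup hbdd (⟨b, hbext⟩ : {b : ℕ → Option (Fin n) // ∀ s, s ≤ m → b s = a s})
  have h2 : ((∑ t ∈ Finset.Icc (m + 1) M, Rorra n d E' b'.1 t : ℕ) : ℝ)
      ≤ ((∑ t ∈ Finset.Icc (m + 1) M, Rorra n d E b t : ℕ) : ℝ) + (d : ℝ) := by
    exact_mod_cast hsum
  linarith
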